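/- Let G and H be episodes with H transitively closed, and let n be a node of H such that no label of an event of n occurs among the labels of G. Let H' be the episode obtained from H by deleting the node n, its events, and all edges incident to n. Then G ⪯ H if and only if G ⪯ H'. -/

import Mathlib

/-- A sequence event: a unique id, a label (from alphabet encoded as `ℕ`),
and an integer time stamp. -/
structure SeqEvent where
  id : ℕ
  lab : ℕ
  ts : ℤ
deriving DecidableEq

/-- An event sequence: a finite collection of sequence events with distinct ids,
whose time stamps are monotone in the ids. -/
structure EventSeq where
  events : Finset SeqEvent
  id_inj : ∀ e ∈ events, ∀ f ∈ events, e.id = f.id → e = f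
  ts_mono : ∀ e ∈ events, ∀ f ∈ events, e.id ≤ f.id → e.ts ≤ f.ts

/-- An episode: a finite set of episode events (identified by ids in `ℕ`) with labels,
a finite set of graph nodes, a map from events to nodes (surjectivity and the DAG
property are recorded in `Episode.WellFormed`), and weak and proper edges. -/
structure Episode where
  events : Finset ℕ
  lab : ℕ → ℕ
  nodes : Finset ℕ
  node : ℕ → ℕ
  weak : ℕ → ℕ → Prop
  proper : ℕ → ℕ → Prop

namespace Episode

/-- An edge of the episode graph (weak or proper). -/
def edge (G : Episode) (a b : ℕ) : Prop := G.weak a b ∨ G.proper a b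

/-- `G.Desc m n` : `n` is a descendant of `m`, i.e. there is a directed path from `m` to `n`. -/
def Desc (G : Episode) (m n : ℕ) : Prop := Relation.TransGen G.edge m n

/-- `G.PDesc m n` : `n` is a proper descendant of `m`, i.e. some directed path
from `m` to `n` contains a proper edge. -/
def PDesc (G : Episode) (m n : ℕ) : Prop :=
  ∃ a b, Relation.ReflTransGen G.edge m a ∧ G.proper a b ∧ Relation.ReflTransGen G.edge b n

/-- Well-formedness of an episode: events map into the nodes, every node carries an
event, edges run between nodes, the weak and proper edges are disjoint, and the
graph is acyclic (a DAG). -/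
structure WellFormed (G : Episode) : Prop where
  node_mem : ∀ e ∈ G.events, G.node e ∈ G.nodes
  node_surj : ∀ n ∈ G.nodes, ∃ e ∈ G.events, G.node e = n
  weak_mem : ∀ a b, G.weak a b → a ∈ G.nodes ∧ b ∈ G.nodes
  proper_mem : ∀ a b, G.proper a b → a ∈ G.nodes ∧ b ∈ G.nodes
  weak_proper_disjoint : ∀ a b, G.weak a b → G.proper a b → False
  acyclic : ∀ n, ¬ G.Desc n n

/-- The transitive closure of an episode: add an edge from every node to each of its
descendants, proper if the descendant is a proper descendant, weak otherwise. -/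
def tcl (G : Episode) : Episode :=
  { G with
    proper := fun a b => G.PDesc a b
    weak := fun a b => G.Desc a b ∧ ¬ G.PDesc a b }

/-- An episode is transitively closed if it coincides with its transitive closure. -/
def TransClosed (G : Episode) : Prop :=
  (∀ a b, G.proper a b ↔ G.PDesc a b) ∧
  (∀ a b, G.weak a b ↔ (G.Desc a b ∧ ¬ G.PDesc a b))

end Episode

/-- `m` is a coverage mapping of episode `G` into sequence `s`: an injective map from
the episode events into the sequence events preserving labels, mapping events of one
node to a common time stamp, and respecting weak and proper edges. -/
def IsCoverMap (s : EventSeq) (G : Episode) (m : ℕ → SeqEvent) : Prop :=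
  (∀ e ∈ G.events, m e ∈ s.events) ∧
  Set.InjOn m ↑G.events ∧
  (∀ e ∈ G.events, (m e).lab = G.lab e) ∧
  (∀ e ∈ G.events, ∀ f ∈ G.events, G.node e = G.node f → (m e).ts = (m f).ts) ∧
  (∀ e ∈ G.events, ∀ f ∈ G.events, G.Desc (G.node f) (G.node e) → (m f).ts ≤ (m e).ts) ∧
  (∀ e ∈ G.events, ∀ f ∈ G.events, G.PDesc (G.node f) (G.node e) → (m f).ts < (m e).ts)

/-- A sequence `s` covers an episode `G`. -/
def Covers (s : EventSeq) (G : Episode) : Prop := ∃ m, IsCoverMap s G m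

/-- `G ⪯ H` : every sequence covering `H` also covers `G`. -/
def Subepisode (G H : Episode) : Prop := ∀ s : EventSeq, Covers s H → Covers s G

/-- `G ∼ H` : `G ⪯ H` and `H ⪯ G`. -/
def EpisodeSimilar (G H : Episode) : Prop := Subepisode G H ∧ Subepisode H G

/-- The window `s[i, j]`: the subsequence of events with time stamps in `[i, j]`. -/
def EventSeq.window (s : EventSeq) (i j : ℤ) : EventSeq where
  events := s.events.filter (fun e => i ≤ e.ts ∧ e.ts ≤ j)
  id_inj := fun e he f hf h =>
    s.id_inj e (Finset.mem_filter.mp he).1 f (Finset.mem_filter.mp hf).1 h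
  ts_mono := fun e he f hf h =>
    s.ts_mono e (Finset.mem_filter.mp he).1 f (Finset.mem_filter.mp hf).1 h

/-- The support `fr(G; s)` with window size `ρ`: the number of integers `t` such that
the window `s[t, t + ρ - 1]` covers `G` (as an extended natural number). -/
noncomputable def support (ρ : ℤ) (s : EventSeq) (G : Episode) : ℕ∞ :=
  {t : ℤ | Covers (s.window t (t + ρ - 1)) G}.encard

/-- `first(i)` : the smallest time stamp in the range of the instance. -/
noncomputable def instFirst (G : Episode) (m : ℕ → SeqEvent) : ℤ :=
  sInf ((fun e => (m e).ts) '' ↑G.events)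

/-- `last(i)` : the largest time stamp in the range of the instance. -/
noncomputable def instLast (G : Episode) (m : ℕ → SeqEvent) : ℤ :=
  sSup ((fun e => (m e).ts) '' ↑G.events)

/-- `m` is an instance of `G` in `s` (with window size `ρ`): a coverage mapping of `G`
into `s` such that no used sequence event can be replaced by an unused one with the same
label, the same time stamp and a smaller id, and whose span is less than `ρ`. -/
def IsInstance (ρ : ℤ) (s : EventSeq) (G : Episode) (m : ℕ → SeqEvent) : Prop :=
  IsCoverMap s G m ∧
  (∀ e ∈ G.events, ∀ f ∈ s.events, (∀ e' ∈ G.events, m e' ≠ f) →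
      f.lab = (m e).lab → f.ts = (m e).ts → ¬ f.id < (m e).id) ∧
  instLast G m - instFirst G m ≤ ρ - 1

/-- The episode `G − V`: the induced subepisode of `G` on the nodes outside `V`,
obtained by deleting the nodes of `V`, their events, and all incident edges. -/
def Episode.eraseNodes (G : Episode) (V : Finset ℕ) : Episode where
  events := G.events.filter (fun e => G.node e ∉ V)
  lab := G.lab
  nodes := G.nodes \ V
  node := G.node
  weak := fun a b => G.weak a b ∧ a ∉ V ∧ b ∉ V
  proper := fun a b => G.proper a b ∧ a ∉ V ∧ b ∉ V


attribute [local instance] Classical.propDecidable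

namespace EraseAux

open Episode Relation

lemma pdesc_desc' {H : Episode} {p q : ℕ} (h : H.PDesc p q) : H.Desc p q := by
  obtain ⟨a, b, h1, h2, h3⟩ := h
  exact Relation.TransGen.trans_right h1
    (Relation.TransGen.trans_left (Relation.TransGen.single (Or.inr h2)) h3)

lemma desc_trans {H : Episode} {p q r : ℕ} (h1 : H.Desc p q) (h2 : H.Desc q r) :
    H.Desc p r := Relation.TransGen.trans h1 h2

lemma desc_pdesc {H : Episode} {p q r : ℕ} (h1 : H.Desc p q) (h2 : H.PDesc q r) :
    H.PDesc p r := by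
  obtain ⟨a, b, ha, hb, hc⟩ := h2
  exact ⟨a, b, h1.to_reflTransGen.trans ha, hb, hc⟩

lemma pdesc_desc {H : Episode} {p q r : ℕ} (h1 : H.PDesc p q) (h2 : H.Desc q r) :
    H.PDesc p r := by
  obtain ⟨a, b, ha, hb, hc⟩ := h1
  exact ⟨a, b, ha, hb, hc.trans h2.to_reflTransGen⟩

lemma erase_edge {H : Episode} {V : Finset ℕ} {a b : ℕ}
    (h : (H.eraseNodes V).edge a b) : H.edge a b :=
  h.elim (fun h => Or.inl h.1) (fun h => Or.inr h.1)

lemma erase_desc {H : Episode} {V : Finset ℕ} {a b : ℕ}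
    (h : (H.eraseNodes V).Desc a b) : H.Desc a b :=
  Relation.TransGen.mono (fun _ _ => erase_edge) _ _ h

lemma erase_pdesc {H : Episode} {V : Finset ℕ} {a b : ℕ}
    (h : (H.eraseNodes V).PDesc a b) : H.PDesc a b := by
  obtain ⟨x, y, h1, h2, h3⟩ := h
  exact ⟨x, y, Relation.ReflTransGen.mono (fun _ _ => erase_edge) _ _ h1, h2.1,
    Relation.ReflTransGen.mono (fun _ _ => erase_edge) _ _ h3⟩

lemma desc_edge {H : Episode} (hHt : H.TransClosed) {a b : ℕ} (h : H.Desc a b) :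
    H.edge a b := by
  by_cases hp : H.PDesc a b
  · exact Or.inr ((hHt.1 a b).mpr hp)
  · exact Or.inl ((hHt.2 a b).mpr ⟨h, hp⟩)

lemma desc_erase {H : Episode} (hHt : H.TransClosed) {V : Finset ℕ} {a b : ℕ}
    (h : H.Desc a b) (ha : a ∉ V) (hb : b ∉ V) : (H.eraseNodes V).Desc a b := by
  refine Relation.TransGen.single ?_
  rcases desc_edge hHt h with h' | h'
  · exact Or.inl ⟨h', ha, hb⟩
  · exact Or.inr ⟨h', ha, hb⟩

lemma pdesc_erase {H : Episode} (hHt : H.TransClosed) {V : Finset ℕ} {a b : ℕ}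
    (h : H.PDesc a b) (ha : a ∉ V) (hb : b ∉ V) : (H.eraseNodes V).PDesc a b :=
  ⟨a, b, Relation.ReflTransGen.refl, ⟨(hHt.1 a b).mpr h, ha, hb⟩, Relation.ReflTransGen.refl⟩

lemma covers_eraseNodes {s : EventSeq} {H : Episode} {V : Finset ℕ}
    (h : Covers s H) : Covers s (H.eraseNodes V) := by
  obtain ⟨m, h1, h2, h3, h4, h5, h6⟩ := h
  have hev : ∀ e ∈ (H.eraseNodes V).events, e ∈ H.events :=
    fun e he => (Finset.mem_filter.mp he).1
  refine ⟨m, fun e he => h1 e (hev e he),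
    h2.mono (Finset.coe_subset.mpr (Finset.filter_subset _ _)),
    fun e he => h3 e (hev e he),
    fun e he f hf hnf => h4 e (hev e he) f (hev f hf) hnf,
    fun e he f hf hd => h5 e (hev e he) f (hev f hf) (erase_desc hd),
    fun e he f hf hd => h6 e (hev e he) f (hev f hf) (erase_pdesc hd)⟩

end EraseAux

/-- Lemma 7 of the paper: let `G` and `H` be episodes with `H`
transitively closed and let `n` be a node of `H` none of whose event labels occurs
among the labels of `G`. Let `H'` be obtained from `H` by deleting the node `n`, its
events and all incident edges. Then `G ⪯ H` iff `G ⪯ H'`. -/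
theorem subepisode_eraseNode_iff (G H : Episode)
    (hG : G.WellFormed) (hH : H.WellFormed) (hHt : H.TransClosed)
    (n : ℕ) (hn : n ∈ H.nodes)
    (hlab : ∀ e ∈ H.events, H.node e = n → ∀ g ∈ G.events, G.lab g ≠ H.lab e) :
    Subepisode G H ↔ Subepisode G (H.eraseNodes {n}) := by
  classical
  constructor
  · -- hard direction
    intro hGH s hs
    obtain ⟨mc, hc1, hc2, hc3, hc4, hc5, hc6⟩ := hs
    have hmemH' : ∀ e, e ∈ H.events → H.node e ≠ n → e ∈ (H.eraseNodes {n}).events := by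
      intro e he hne
      simp [Episode.eraseNodes, he, hne]
    have hle : ∀ f ∈ H.events, ∀ e ∈ H.events, H.node f ≠ n → H.node e ≠ n →
        H.Desc (H.node f) (H.node e) → (mc f).ts ≤ (mc e).ts := by
      intro f hf e he hfn hen hd
      exact hc5 e (hmemH' e he hen) f (hmemH' f hf hfn)
        (show (H.eraseNodes {n}).Desc (H.node f) (H.node e) from
          EraseAux.desc_erase hHt hd (by simpa using hfn) (by simpa using hen))
    have hlt : ∀ f ∈ H.events, ∀ e ∈ H.events, H.node f ≠ n → H.node e ≠ n →
        H.PDesc (H.node f) (H.node e) → (mc f).ts < (mc e).ts := by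
      intro f hf e he hfn hen hd
      exact hc6 e (hmemH' e he hen) f (hmemH' f hf hfn)
        (show (H.eraseNodes {n}).PDesc (H.node f) (H.node e) from
          EraseAux.pdesc_erase hHt hd (by simpa using hfn) (by simpa using hen))
    set K := H.events.sup id + 2 with hK
    have hKpos : 0 < K := by omega
    have hKbig : ∀ e ∈ H.events, e + 1 < K := by
      intro e he
      have := Finset.le_sup (f := id) he
      simp only [id] at this
      omega
    set P := H.events.filter (fun f => H.node f ≠ n ∧ H.Desc (H.node f) n) with hP
    set S := H.events.filter (fun e => H.node e ≠ n ∧ H.Desc n (H.node e)) with hS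
    set v : ℕ → ℤ := fun f => 2 * (mc f).ts + (if H.PDesc (H.node f) n then 1 else 0) with hv
    set t : ℤ := if hPne : P.Nonempty then P.sup' hPne v
      else if hSne : S.Nonempty then S.inf' hSne (fun e => 2 * (mc e).ts) - 1 else 0 with ht
    have hT1 : ∀ f ∈ P, 2 * (mc f).ts ≤ t ∧ (H.PDesc (H.node f) n → 2 * (mc f).ts < t) := by
      intro f hfP
      have hPne : P.Nonempty := ⟨f, hfP⟩
      have hvle : v f ≤ t := by
        rw [ht, dif_pos hPne]
        exact Finset.le_sup' v hfP
      constructor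
      · have : 2 * (mc f).ts ≤ v f := by
          rw [hv]; dsimp only; split_ifs <;> omega
        omega
      · intro hp
        have : v f = 2 * (mc f).ts + 1 := by rw [hv]; simp [hp]
        omega
    have hT2 : ∀ e ∈ S, t ≤ 2 * (mc e).ts ∧ (H.PDesc n (H.node e) → t < 2 * (mc e).ts) := by
      intro e heS
      obtain ⟨heH, hen, hde⟩ := Finset.mem_filter.mp heS
      by_cases hPne : P.Nonempty
      · have key : ∀ f ∈ P, v f ≤ 2 * (mc e).ts ∧
            (H.PDesc n (H.node e) → v f < 2 * (mc e).ts) := by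
          intro f hfP
          obtain ⟨hfH, hfn, hdf⟩ := Finset.mem_filter.mp hfP
          by_cases hpf : H.PDesc (H.node f) n
          · have hpq : H.PDesc (H.node f) (H.node e) := EraseAux.pdesc_desc hpf hde
            have h1 := hlt f hfH e heH hfn hen hpq
            constructor
            · rw [hv]; simp only [hpf, if_true]; omega
            · intro _; rw [hv]; simp only [hpf, if_true]; omega
          · have hdq : H.Desc (H.node f) (H.node e) := EraseAux.desc_trans hdf hde
            have h1 := hle f hfH e heH hfn hen hdq
            refine ⟨by rw [hv]; simp only [hpf, if_false]; omega, fun hpn => ?_⟩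
            have h2 := hlt f hfH e heH hfn hen (EraseAux.desc_pdesc hdf hpn)
            rw [hv]; simp only [hpf, if_false]; omega
        constructor
        · rw [ht, dif_pos hPne]
          exact Finset.sup'_le _ _ (fun f hf => (key f hf).1)
        · intro hpn
          rw [ht, dif_pos hPne]
          exact (Finset.sup'_lt_iff hPne).mpr (fun f hf => (key f hf).2 hpn)
      · have hSne : S.Nonempty := ⟨e, heS⟩
        have hinf : S.inf' hSne (fun e => 2 * (mc e).ts) ≤ 2 * (mc e).ts :=
          Finset.inf'_le _ heS
        rw [ht, dif_neg hPne, dif_pos hSne]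
        omega
    set oldT : SeqEvent → SeqEvent := fun u => ⟨K * (u.id + 1), u.lab, 2 * u.ts⟩ with holdT
    set A := s.events.filter (fun u => 2 * u.ts ≤ t) with hA
    set M := A.sup (fun u => u.id + 1) with hM
    set newE : ℕ → SeqEvent := fun e => ⟨K * M + 1 + e, H.lab e, t⟩ with hnewE
    set NE := H.events.filter (fun e => H.node e = n) with hNE
    have hmod : ∀ e, e + 1 < K → (K * M + 1 + e) % K = 1 + e := by
      intro e hb
      have h1 : K * M + 1 + e = 1 + e + M * K := by ring
      rw [h1, Nat.add_mul_mod_self_right, Nat.mod_eq_of_lt (by omega)]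
    have hid_ne : ∀ (i : ℕ), ∀ e ∈ H.events, K * (i + 1) ≠ K * M + 1 + e := by
      intro i e he heq
      have h1 : (K * (i + 1)) % K = 0 := Nat.mul_mod_right K _
      rw [heq, hmod e (hKbig e he)] at h1
      omega
    set ev' := s.events.image oldT ∪ NE.image newE with hev'
    have hmem'' : ∀ x, x ∈ ev' ↔
        (∃ u ∈ s.events, oldT u = x) ∨ (∃ e ∈ H.events, H.node e = n ∧ newE e = x) := by
      intro x
      rw [hev']
      simp only [Finset.mem_union, Finset.mem_image, hNE, Finset.mem_filter]
      constructor
      · rintro (⟨u, hu, rfl⟩ | ⟨e, ⟨he, hne⟩, rfl⟩)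
        · exact Or.inl ⟨u, hu, rfl⟩
        · exact Or.inr ⟨e, he, hne, rfl⟩
      · rintro (⟨u, hu, rfl⟩ | ⟨e, he, hne, rfl⟩)
        · exact Or.inl ⟨u, hu, rfl⟩
        · exact Or.inr ⟨e, ⟨he, hne⟩, rfl⟩
    have hinj' : ∀ x ∈ ev', ∀ y ∈ ev', x.id = y.id → x = y := by
      intro x hx y hy hxy
      rw [hmem''] at hx hy
      rcases hx with ⟨u, hu, rfl⟩ | ⟨e, he, hne, rfl⟩ <;>
        rcases hy with ⟨w, hw, rfl⟩ | ⟨f, hf, hnf, rfl⟩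
      · have h1 : K * (u.id + 1) = K * (w.id + 1) := hxy
        have h2 : u.id = w.id := by
          have := Nat.eq_of_mul_eq_mul_left hKpos h1
          omega
        rw [s.id_inj u hu w hw h2]
      · exact absurd hxy (hid_ne u.id f hf)
      · exact absurd hxy.symm (hid_ne w.id e he)
      · have h1 : K * M + 1 + e = K * M + 1 + f := hxy
        have h2 : e = f := by omega
        rw [h2]
    have hmono' : ∀ x ∈ ev', ∀ y ∈ ev', x.id ≤ y.id → x.ts ≤ y.ts := by
      intro x hx y hy hxy
      rw [hmem''] at hx hy
      rcases hx with ⟨u, hu, rfl⟩ | ⟨e, he, hne, rfl⟩ <;>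
        rcases hy with ⟨w, hw, rfl⟩ | ⟨f, hf, hnf, rfl⟩
      · have h1 : K * (u.id + 1) ≤ K * (w.id + 1) := hxy
        have h2 : u.id ≤ w.id := by
          have := Nat.le_of_mul_le_mul_left h1 hKpos
          omega
        have := s.ts_mono u hu w hw h2
        show 2 * u.ts ≤ 2 * w.ts
        omega
      · -- old u ≤ new f
        have h1 : K * (u.id + 1) ≤ K * M + 1 + f := hxy
        have hfb : f + 1 < K := hKbig f hf
        have hexp : K * (M + 1) = K * M + K := by ring
        have hlt2 : u.id + 1 < M + 1 := by
          by_contra hcon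
          push_neg at hcon
          have : K * (M + 1) ≤ K * (u.id + 1) := Nat.mul_le_mul_left K hcon
          omega
        have hAne : A.Nonempty := by
          by_contra hcon
          rw [Finset.not_nonempty_iff_eq_empty] at hcon
          rw [hM, hcon] at hlt2
          simp at hlt2
        obtain ⟨g, hgA, hgsup⟩ := Finset.exists_mem_eq_sup A hAne (fun u => u.id + 1)
        obtain ⟨hgs, hgt⟩ := Finset.mem_filter.mp (hA ▸ hgA)
        have hidle : u.id ≤ g.id := by
          rw [hM, hgsup] at hlt2
          omega
        have := s.ts_mono u hu g hgs hidle
        show 2 * u.ts ≤ t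
        omega
      · -- new e ≤ old w
        have h1 : K * M + 1 + e ≤ K * (w.id + 1) := hxy
        have hwM : M ≤ w.id := by
          by_contra hcon
          push_neg at hcon
          have : K * (w.id + 1) ≤ K * M := Nat.mul_le_mul_left K (by omega)
          omega
        have hwA : w ∉ A := by
          intro hwA
          have h2 : w.id + 1 ≤ A.sup (fun u => u.id + 1) :=
            Finset.le_sup (f := fun u => u.id + 1) hwA
          rw [← hM] at h2
          omega
        have hwt : ¬ (2 * w.ts ≤ t) := by
          intro hcon
          exact hwA (hA ▸ Finset.mem_filter.mpr ⟨hw, hcon⟩)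
        show t ≤ 2 * w.ts
        omega
      · exact le_refl t
    set s' : EventSeq := ⟨ev', hinj', hmono'⟩ with hs'
    have hold_mem : ∀ u ∈ s.events, oldT u ∈ s'.events := by
      intro u hu
      show oldT u ∈ ev'
      rw [hmem'']
      exact Or.inl ⟨u, hu, rfl⟩
    have hnew_mem : ∀ e ∈ H.events, H.node e = n → newE e ∈ s'.events := by
      intro e he hne
      show newE e ∈ ev'
      rw [hmem'']
      exact Or.inr ⟨e, he, hne, rfl⟩
    set m' : ℕ → SeqEvent := fun e => if H.node e = n then newE e else oldT (mc e) with hm'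
    have hm'n : ∀ e, H.node e = n → m' e = newE e := by
      intro e he; rw [hm']; simp [he]
    have hm'o : ∀ e, H.node e ≠ n → m' e = oldT (mc e) := by
      intro e he; rw [hm']; simp [he]
    have hcov' : Covers s' H := by
      refine ⟨m', ?_, ?_, ?_, ?_, ?_, ?_⟩
      · intro e he
        by_cases hne : H.node e = n
        · rw [hm'n e hne]; exact hnew_mem e he hne
        · rw [hm'o e hne]; exact hold_mem _ (hc1 e (hmemH' e he hne))
      · intro x hx y hy hxy
        rw [Finset.mem_coe] at hx hy
        by_cases hxn : H.node x = n <;> by_cases hyn : H.node y = n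
        · rw [hm'n x hxn, hm'n y hyn] at hxy
          have : K * M + 1 + x = K * M + 1 + y := congrArg SeqEvent.id hxy
          omega
        · exfalso
          rw [hm'n x hxn, hm'o y hyn] at hxy
          have hid : K * M + 1 + x = K * ((mc y).id + 1) := congrArg SeqEvent.id hxy
          exact hid_ne (mc y).id x hx hid.symm
        · exfalso
          rw [hm'o x hxn, hm'n y hyn] at hxy
          have hid : K * ((mc x).id + 1) = K * M + 1 + y := congrArg SeqEvent.id hxy
          exact hid_ne (mc x).id y hy hid
        · rw [hm'o x hxn, hm'o y hyn] at hxy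
          have hid : K * ((mc x).id + 1) = K * ((mc y).id + 1) := congrArg SeqEvent.id hxy
          have h2 : (mc x).id = (mc y).id := by
            have := Nat.eq_of_mul_eq_mul_left hKpos hid
            omega
          have h3 : mc x = mc y :=
            s.id_inj _ (hc1 x (hmemH' x hx hxn)) _ (hc1 y (hmemH' y hy hyn)) h2
          exact hc2 (Finset.mem_coe.mpr (hmemH' x hx hxn))
            (Finset.mem_coe.mpr (hmemH' y hy hyn)) h3
      · intro e he
        by_cases hne : H.node e = n
        · rw [hm'n e hne]
        · rw [hm'o e hne]
          show (mc e).lab = H.lab e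
          exact hc3 e (hmemH' e he hne)
      · intro e he f hf hnf
        by_cases hne : H.node e = n
        · have hnf' : H.node f = n := by rw [← hnf]; exact hne
          rw [hm'n e hne, hm'n f hnf']
        · have hnf' : H.node f ≠ n := by rw [← hnf]; exact hne
          rw [hm'o e hne, hm'o f hnf']
          have h1 : (mc e).ts = (mc f).ts :=
            hc4 e (hmemH' e he hne) f (hmemH' f hf hnf') hnf
          show 2 * (mc e).ts = 2 * (mc f).ts
          omega
      · intro e he f hf hd
        by_cases hfn : H.node f = n <;> by_cases hen : H.node e = n
        · rw [hfn, hen] at hd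
          exact absurd hd (hH.acyclic n)
        · rw [hfn] at hd
          have heS : e ∈ S := hS ▸ Finset.mem_filter.mpr ⟨he, hen, hd⟩
          rw [hm'n f hfn, hm'o e hen]
          show t ≤ 2 * (mc e).ts
          exact (hT2 e heS).1
        · rw [hen] at hd
          have hfP : f ∈ P := hP ▸ Finset.mem_filter.mpr ⟨hf, hfn, hd⟩
          rw [hm'o f hfn, hm'n e hen]
          show 2 * (mc f).ts ≤ t
          exact (hT1 f hfP).1
        · have h1 := hle f hf e he hfn hen hd
          rw [hm'o f hfn, hm'o e hen]
          show 2 * (mc f).ts ≤ 2 * (mc e).ts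
          omega
      · intro e he f hf hd
        by_cases hfn : H.node f = n <;> by_cases hen : H.node e = n
        · rw [hfn, hen] at hd
          exact absurd (EraseAux.pdesc_desc' hd) (hH.acyclic n)
        · rw [hfn] at hd
          have heS : e ∈ S := hS ▸ Finset.mem_filter.mpr ⟨he, hen, EraseAux.pdesc_desc' hd⟩
          rw [hm'n f hfn, hm'o e hen]
          show t < 2 * (mc e).ts
          exact (hT2 e heS).2 hd
        · rw [hen] at hd
          have hfP : f ∈ P := hP ▸ Finset.mem_filter.mpr ⟨hf, hfn, EraseAux.pdesc_desc' hd⟩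
          rw [hm'o f hfn, hm'n e hen]
          show 2 * (mc f).ts < t
          exact (hT1 f hfP).2 hd
        · have h1 := hlt f hf e he hfn hen hd
          rw [hm'o f hfn, hm'o e hen]
          show 2 * (mc f).ts < 2 * (mc e).ts
          omega
    obtain ⟨mg, hg1, hg2, hg3, hg4, hg5, hg6⟩ := hGH s' hcov'
    have hgold : ∀ g ∈ G.events, ∃ u, u ∈ s.events ∧ oldT u = mg g := by
      intro g hg
      have hmem := hg1 g hg
      have hmem2 : mg g ∈ ev' := hmem
      rw [hmem''] at hmem2
      rcases hmem2 with ⟨u, hu, he⟩ | ⟨e, heH, hene, he⟩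
      · exact ⟨u, hu, he⟩
      · exfalso
        have hlabg : (mg g).lab = G.lab g := hg3 g hg
        have hlabn : (newE e).lab = H.lab e := rfl
        exact hlab e heH hene g hg (by rw [← hlabg, ← he, hlabn])
    set mg' : ℕ → SeqEvent :=
      fun g => if h : ∃ u, u ∈ s.events ∧ oldT u = mg g then h.choose else ⟨0, 0, 0⟩ with hmg'
    have hspec : ∀ g ∈ G.events, mg' g ∈ s.events ∧ oldT (mg' g) = mg g := by
      intro g hg
      have h := hgold g hg
      rw [hmg']
      simp only [dif_pos h]
      exact h.choose_spec
    have htseq : ∀ g ∈ G.events, (mg g).ts = 2 * (mg' g).ts := by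
      intro g hg
      have h := (hspec g hg).2
      have := congrArg SeqEvent.ts h
      exact this.symm
    refine ⟨mg', fun g hg => (hspec g hg).1, ?_, ?_, ?_, ?_, ?_⟩
    · intro x hx y hy hxy
      apply hg2 hx hy
      rw [← (hspec x (Finset.mem_coe.mp hx)).2, ← (hspec y (Finset.mem_coe.mp hy)).2, hxy]
    · intro g hg
      have h := congrArg SeqEvent.lab (hspec g hg).2
      have h2 : (mg' g).lab = (mg g).lab := h
      rw [h2]
      exact hg3 g hg
    · intro e he f hf hnf
      have h1 := hg4 e he f hf hnf
      rw [htseq e he, htseq f hf] at h1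
      omega
    · intro e he f hf hd
      have h1 := hg5 e he f hf hd
      rw [htseq e he, htseq f hf] at h1
      omega
    · intro e he f hf hd
      have h1 := hg6 e he f hf hd
      rw [htseq e he, htseq f hf] at h1
      omega
  · intro hGH' s hs
    exact hGH' s (EraseAux.covers_eraseNodes hs)
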